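/- For s+1 \le a \le b \le n-s-2, the tree T^{a,b}_n satisfies W(T^{a,b}_n) \le W(T^{a, n-s-2}_n), with equality if and only if b = n-s-2. -/
import Mathlib


open SimpleGraph Finset

/-- Wiener index: sum of distances over unordered pairs. -/
noncomputable def wiener {V : Type*} [Fintype V] (G : SimpleGraph V) : ℕ :=
  (∑ u : V, ∑ v : V, G.dist u v) / 2

/-- Sum of distances from a vertex. -/
noncomputable def distSum {V : Type*} [Fintype V] (G : SimpleGraph V) (u : V) : ℕ :=
  ∑ v : V, G.dist u v

/-- Distance between two vertex subsets. -/
noncomputable def setDist {V : Type*} (G : SimpleGraph V) (A B : Finset V) : ℕ :=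
  sInf {d | ∃ x ∈ A, ∃ y ∈ B, G.dist x y = d}

/-- Conditional diameter `D(G; s)`. -/
noncomputable def condDiam {V : Type*} (G : SimpleGraph V) (s : ℕ) : ℕ :=
  sSup {d | ∃ A B : Finset V, A.card = s ∧ B.card = s ∧ setDist G A B = d}

/-- `T^i_n` (1-based `i`): path `x_1 … x_{n-1}` (vertices `0,…,n-2`) with a pendant
vertex (vertex `n-1`) attached to `x_i` (vertex `i-1`). -/
def Tpend (n i : ℕ) : SimpleGraph (Fin n) :=
  SimpleGraph.fromRel (fun u v =>
    (u.val + 1 = v.val ∧ v.val ≤ n - 2) ∨ (u.val = i - 1 ∧ v.val = n - 1))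

/-- `T^{i,j}_n` (1-based): path `x_1 … x_{n-2}` (vertices `0,…,n-3`) with pendant
vertices `n-2` attached to `x_i` and `n-1` attached to `x_j`. -/
def Tpend2 (n i j : ℕ) : SimpleGraph (Fin n) :=
  SimpleGraph.fromRel (fun u v =>
    (u.val + 1 = v.val ∧ v.val ≤ n - 3) ∨ (u.val = i - 1 ∧ v.val = n - 2) ∨
      (u.val = j - 1 ∧ v.val = n - 1))

/-- `T^{i(2)}_n` (1-based): path `x_1 … x_{n-2}` with a pendant path `x_i - w_1 - w_2`
(`w_1 = n-2`, `w_2 = n-1`). -/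
def TpendPath2 (n i : ℕ) : SimpleGraph (Fin n) :=
  SimpleGraph.fromRel (fun u v =>
    (u.val + 1 = v.val ∧ v.val ≤ n - 3) ∨ (u.val = i - 1 ∧ v.val = n - 2) ∨
      (u.val = n - 2 ∧ v.val = n - 1))

namespace Aux14

/-- natural absolute difference -/
def dN (x y : ℕ) : ℕ := (x - y) + (y - x)

/-- base point of a vertex -/
def pos (n a b : ℕ) (u : Fin n) : ℕ :=
  if u.val = n - 1 then b - 1 else if u.val = n - 2 then a - 1 else u.val

/-- extra step for pendant vertices -/
def ext (n : ℕ) (u : Fin n) : ℕ := if n - 2 ≤ u.val then 1 else 0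

/-- explicit distance function -/
def Dfun (n a b : ℕ) (u v : Fin n) : ℕ :=
  if u = v then 0 else dN (pos n a b u) (pos n a b v) + ext n u + ext n v

lemma Dfun_self (n a b : ℕ) (u : Fin n) : Dfun n a b u u = 0 := by simp [Dfun]

lemma Dfun_comm (n a b : ℕ) (u v : Fin n) : Dfun n a b u v = Dfun n a b v u := by
  unfold Dfun
  rcases eq_or_ne u v with rfl | h
  · simp
  · rw [if_neg h, if_neg (Ne.symm h)]
    unfold dN
    omega

lemma Dfun_triangle (n a b : ℕ) (u v w : Fin n) :
    Dfun n a b u w ≤ Dfun n a b u v + Dfun n a b v w := by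
  rcases eq_or_ne u v with rfl | huv
  · simp [Dfun_self]
  rcases eq_or_ne v w with rfl | hvw
  · simp [Dfun_self]
  rcases eq_or_ne u w with rfl | huw
  · simp [Dfun_self]
  simp only [Dfun, if_neg huv, if_neg hvw, if_neg huw, dN]
  omega

section
variable {n a b : ℕ} (hn : 7 ≤ n) (ha1 : 1 ≤ a) (ha3 : a ≤ n - 3)
  (hb1 : 1 ≤ b) (hb3 : b ≤ n - 3)

include hn ha1 ha3 hb1 hb3 in
lemma Dfun_adj {u v : Fin n} (h : (Tpend2 n a b).Adj u v) : Dfun n a b u v = 1 := by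
  rw [Tpend2, fromRel_adj] at h
  obtain ⟨hne, h⟩ := h
  have hu := u.isLt
  have hv := v.isLt
  have hne' : u.val ≠ v.val := fun hh => hne (Fin.ext hh)
  simp only [Dfun, if_neg hne, pos, ext, dN]
  split_ifs <;> omega

include hn ha1 ha3 hb1 hb3 in
lemma Dfun_le_length {u v : Fin n} (w : (Tpend2 n a b).Walk u v) :
    Dfun n a b u v ≤ w.length := by
  induction w with
  | nil => simp [Dfun_self]
  | @cons x y z h p ih =>
    have h1 := Dfun_triangle n a b x y z
    have h2 := Dfun_adj hn ha1 ha3 hb1 hb3 h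
    simp only [SimpleGraph.Walk.length_cons]
    omega

include hn in
lemma adj_succ (u : Fin n) (h : u.val + 1 ≤ n - 3) :
    (Tpend2 n a b).Adj u ⟨u.val + 1, by omega⟩ := by
  rw [Tpend2, fromRel_adj]
  constructor
  · intro he
    rw [Fin.ext_iff] at he
    simp at he
  · exact Or.inl (Or.inl ⟨rfl, h⟩)

include hn in
lemma walk_path : ∀ (d : ℕ) (u v : Fin n), u.val + d = v.val → v.val ≤ n - 3 →
    ∃ w : (Tpend2 n a b).Walk u v, w.length = d := by
  intro d
  induction d with
  | zero =>
    intro u v h _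
    have : u = v := Fin.ext (by omega)
    subst this
    exact ⟨SimpleGraph.Walk.nil, rfl⟩
  | succ d ih =>
    intro u v h hv
    have hadj := adj_succ (a := a) (b := b) hn u (by omega)
    obtain ⟨w, hw⟩ := ih ⟨u.val + 1, by omega⟩ v (by simp; omega) hv
    exact ⟨SimpleGraph.Walk.cons hadj w, by simp [hw]⟩

include hn in
lemma walk_path2 (u v : Fin n) (hu : u.val ≤ n - 3) (hv : v.val ≤ n - 3) :
    ∃ w : (Tpend2 n a b).Walk u v, w.length = dN u.val v.val := by
  rcases le_total u.val v.val with h | h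
  · obtain ⟨w, hw⟩ := walk_path (a := a) (b := b) hn (v.val - u.val) u v (by omega) hv
    exact ⟨w, by rw [hw]; unfold dN; omega⟩
  · obtain ⟨w, hw⟩ := walk_path (a := a) (b := b) hn (u.val - v.val) v u (by omega) hu
    exact ⟨w.reverse, by rw [SimpleGraph.Walk.length_reverse, hw]; unfold dN; omega⟩

include hn ha1 ha3 hb1 hb3 in
lemma pos_le (u : Fin n) : pos n a b u ≤ n - 3 := by
  have := u.isLt
  unfold pos
  split_ifs <;> omega

include hn ha1 ha3 hb1 hb3 in
lemma walk_base (u : Fin n) :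
    ∃ w : (Tpend2 n a b).Walk u ⟨pos n a b u, by have := pos_le hn ha1 ha3 hb1 hb3 u; omega⟩,
      w.length = ext n u := by
  have hplt : pos n a b u < n := by have := pos_le hn ha1 ha3 hb1 hb3 u; omega
  have hu := u.isLt
  by_cases h1 : u.val = n - 1
  · have hpos : pos n a b u = b - 1 := by unfold pos; rw [if_pos h1]
    have hadj : (Tpend2 n a b).Adj u ⟨pos n a b u, hplt⟩ := by
      rw [Tpend2, fromRel_adj]
      constructor
      · intro he
        rw [Fin.ext_iff] at he
        simp only at he
        omega
      · exact Or.inr (Or.inr (Or.inr ⟨hpos, h1⟩))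
    refine ⟨SimpleGraph.Walk.cons hadj SimpleGraph.Walk.nil, ?_⟩
    simp only [SimpleGraph.Walk.length_cons, SimpleGraph.Walk.length_nil]
    unfold ext
    rw [if_pos (by omega)]
  · by_cases h2 : u.val = n - 2
    · have hpos : pos n a b u = a - 1 := by unfold pos; rw [if_neg h1, if_pos h2]
      have hadj : (Tpend2 n a b).Adj u ⟨pos n a b u, hplt⟩ := by
        rw [Tpend2, fromRel_adj]
        constructor
        · intro he
          rw [Fin.ext_iff] at he
          simp only at he
          omega
        · exact Or.inr (Or.inr (Or.inl ⟨hpos, h2⟩))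
      refine ⟨SimpleGraph.Walk.cons hadj SimpleGraph.Walk.nil, ?_⟩
      simp only [SimpleGraph.Walk.length_cons, SimpleGraph.Walk.length_nil]
      unfold ext
      rw [if_pos (by omega)]
    · have hpos : pos n a b u = u.val := by unfold pos; rw [if_neg h1, if_neg h2]
      have heq : (⟨pos n a b u, hplt⟩ : Fin n) = u := Fin.ext hpos
      rw [heq]
      refine ⟨SimpleGraph.Walk.nil, ?_⟩
      simp only [SimpleGraph.Walk.length_nil]
      unfold ext
      rw [if_neg (by omega)]

include hn ha1 ha3 hb1 hb3 in
lemma exists_walk (u v : Fin n) :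
    ∃ w : (Tpend2 n a b).Walk u v,
      w.length = dN (pos n a b u) (pos n a b v) + ext n u + ext n v := by
  obtain ⟨wu, hwu⟩ := walk_base hn ha1 ha3 hb1 hb3 u
  obtain ⟨wv, hwv⟩ := walk_base hn ha1 ha3 hb1 hb3 v
  obtain ⟨wm, hwm⟩ := walk_path2 (a := a) (b := b) hn
    ⟨pos n a b u, by have := pos_le hn ha1 ha3 hb1 hb3 u; omega⟩
    ⟨pos n a b v, by have := pos_le hn ha1 ha3 hb1 hb3 v; omega⟩
    (pos_le hn ha1 ha3 hb1 hb3 u) (pos_le hn ha1 ha3 hb1 hb3 v)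
  refine ⟨wu.append (wm.append wv.reverse), ?_⟩
  simp [SimpleGraph.Walk.length_append, SimpleGraph.Walk.length_reverse, hwu, hwv, hwm]
  omega

include hn ha1 ha3 hb1 hb3 in
lemma dist_eq (u v : Fin n) : (Tpend2 n a b).dist u v = Dfun n a b u v := by
  obtain ⟨w, hw⟩ := exists_walk hn ha1 ha3 hb1 hb3 u v
  apply le_antisymm
  · rcases eq_or_ne u v with rfl | hne
    · simp [Dfun_self]
    · have := SimpleGraph.dist_le w
      rw [hw] at this
      simpa [Dfun, if_neg hne] using this
  · obtain ⟨p, hp⟩ := (SimpleGraph.Walk.reachable w).exists_walk_length_eq_dist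
    have := Dfun_le_length hn ha1 ha3 hb1 hb3 p
    omega

end

lemma sumA (p : ℕ) : ∀ m : ℕ, 2 * (∑ k ∈ Finset.range m, (p - k)) + (p - m) * (p - m + 1)
    = p * (p + 1) := by
  intro m
  induction m with
  | zero => simp
  | succ m ih =>
    rw [Finset.sum_range_succ]
    rcases le_or_gt p m with h | h
    · have hx : p - m = 0 := by omega
      have hx' : p - (m + 1) = 0 := by omega
      rw [hx] at ih
      rw [hx, hx']
      simpa using ih
    · have hx : p - m = (p - (m + 1)) + 1 := by omega
      rw [hx] at ih ⊢
      ring_nf at ih ⊢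
      linarith

lemma sumB (p : ℕ) : ∀ m : ℕ, 2 * (∑ k ∈ Finset.range m, (k - p)) = (m - p) * (m - p - 1) := by
  intro m
  induction m with
  | zero => simp
  | succ m ih =>
    rw [Finset.sum_range_succ]
    rcases le_or_gt m p with h | h
    · have hx : m - p = 0 := by omega
      have hz : (m + 1 - p) * (m + 1 - p - 1) = 0 := by
        rcases (by omega : m + 1 - p = 0 ∨ m + 1 - p = 1) with h' | h' <;> rw [h']
      rw [hx] at ih ⊢
      rw [hz]
      simp at ih ⊢
      omega
    · obtain ⟨t, ht⟩ : ∃ t, m - p - 1 = t := ⟨_, rfl⟩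
      have h1 : m - p = t + 1 := by omega
      have h2 : m + 1 - p = t + 2 := by omega
      have h3 : m + 1 - p - 1 = t + 1 := by omega
      rw [h1] at ih
      rw [h1, h3, h2]
      simp only [Nat.add_sub_cancel] at ih
      ring_nf at ih ⊢
      linarith

lemma sum_dN (m p : ℕ) (hp : p < m) :
    2 * (∑ k ∈ Finset.range m, dN p k) = p * (p + 1) + (m - p) * (m - p - 1) := by
  have hA := sumA p m
  have hB := sumB p m
  have h0 : p - m = 0 := by omega
  rw [h0] at hA
  simp at hA
  have hsplit : ∑ k ∈ Finset.range m, dN p k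
      = (∑ k ∈ Finset.range m, (p - k)) + ∑ k ∈ Finset.range m, (k - p) := by
    simp only [dN]
    rw [Finset.sum_add_distrib]
  rw [hsplit]
  linarith

/-- value of Dfun from the last vertex, as a function of `v.val` -/
def gfun (n a b k : ℕ) : ℕ :=
  if k = n - 1 then 0 else if k = n - 2 then dN (b - 1) (a - 1) + 2 else dN (b - 1) k + 1

section
variable {n a b : ℕ} (hn : 7 ≤ n) (ha1 : 1 ≤ a) (ha3 : a ≤ n - 3)
  (hb1 : 1 ≤ b) (hb3 : b ≤ n - 3)

omit ha3 hb3 in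
include hn ha1 hb1 in
lemma Dfun_last (L v : Fin n) (hL : L.val = n - 1) :
    Dfun n a b L v = gfun n a b v.val := by
  have hv := v.isLt
  by_cases h1 : v.val = n - 1
  · have hvL : v = L := Fin.ext (by omega)
    rw [hvL, Dfun_self]
    unfold gfun
    rw [if_pos hL]
  · have hne : L ≠ v := fun he => h1 (by rw [← he, hL])
    simp only [Dfun, if_neg hne, pos, ext, dN, gfun]
    split_ifs <;> omega

include hn ha1 ha3 hb1 hb3 in
lemma row_sum (L : Fin n) (hL : L.val = n - 1) :
    2 * (∑ v : Fin n, Dfun n a b L v)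
    = (b - 1) * b + (n - 1 - b) * (n - 2 - b) + 2 * (n - 2) + 2 * (dN (b - 1) (a - 1)) + 4 := by
  have h1 : ∑ v : Fin n, Dfun n a b L v = ∑ k ∈ Finset.range n, gfun n a b k := by
    rw [← Fin.sum_univ_eq_sum_range (gfun n a b) n]
    exact Finset.sum_congr rfl fun v _ => Dfun_last hn ha1 hb1 L v hL
  have h2 : Finset.range n = Finset.range ((n - 2) + 1 + 1) := by
    congr 1
    omega
  have e2 : gfun n a b (n - 2 + 1) = 0 := by
    unfold gfun
    rw [if_pos (by omega)]
  have e1 : gfun n a b (n - 2) = dN (b - 1) (a - 1) + 2 := by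
    unfold gfun
    rw [if_neg (by omega), if_pos rfl]
  have h3 : ∀ k ∈ Finset.range (n - 2), gfun n a b k = dN (b - 1) k + 1 := by
    intro k hk
    rw [Finset.mem_range] at hk
    unfold gfun
    rw [if_neg (by omega), if_neg (by omega)]
  have h4 : ∑ k ∈ Finset.range (n - 2), gfun n a b k
      = (∑ k ∈ Finset.range (n - 2), dN (b - 1) k) + (n - 2) := by
    rw [Finset.sum_congr rfl h3, Finset.sum_add_distrib]
    simp
  have h5 := sum_dN (n - 2) (b - 1) (by omega)
  have hq1 : (b - 1) * (b - 1 + 1) = (b - 1) * b := by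
    congr 1
    omega
  have hq2 : (n - 2 - (b - 1)) = n - 1 - b := by omega
  have hq3 : (n - 1 - b - 1) = n - 2 - b := by omega
  rw [hq1, hq2, hq3] at h5
  rw [h1, h2, Finset.sum_range_succ, Finset.sum_range_succ, e1, e2, h4]
  ring_nf
  ring_nf at h5
  omega

end

lemma Dfun_indep (n a b b' : ℕ) (u v : Fin n) (hu : u.val ≠ n - 1) (hv : v.val ≠ n - 1) :
    Dfun n a b u v = Dfun n a b' u v := by
  unfold Dfun pos ext dN
  split_ifs <;> omega

lemma total_eq (n a b : ℕ) (L : Fin n) :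
    ∑ u : Fin n, ∑ v : Fin n, Dfun n a b u v
    = (∑ u ∈ Finset.univ.erase L, ∑ v ∈ Finset.univ.erase L, Dfun n a b u v)
      + 2 * ∑ v : Fin n, Dfun n a b L v := by
  have hrow : ∀ u : Fin n, ∑ v : Fin n, Dfun n a b u v
      = (∑ v ∈ Finset.univ.erase L, Dfun n a b u v) + Dfun n a b u L :=
    fun u => (Finset.sum_erase_add Finset.univ _ (Finset.mem_univ L)).symm
  rw [← Finset.sum_erase_add Finset.univ _ (Finset.mem_univ L)]
  rw [Finset.sum_congr rfl fun u _ => hrow u, Finset.sum_add_distrib]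
  have hcol : ∑ u ∈ Finset.univ.erase L, Dfun n a b u L
      = ∑ u ∈ Finset.univ.erase L, Dfun n a b L u :=
    Finset.sum_congr rfl fun u _ => Dfun_comm n a b u L
  have hfull : (∑ u ∈ Finset.univ.erase L, Dfun n a b L u) + Dfun n a b L L
      = ∑ u : Fin n, Dfun n a b L u :=
    Finset.sum_erase_add Finset.univ _ (Finset.mem_univ L)
  rw [Dfun_self] at hfull
  rw [hcol]
  omega

lemma final_ineq (n s a b : ℕ) (hs : 1 ≤ s) (hn : 2 * s + 5 ≤ n)
    (ha : s + 1 ≤ a) (hab : a ≤ b) (hb : b < n - s - 2) :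
    (b - 1) * b + (n - 1 - b) * (n - 2 - b) + 2 * (b - a) + 2
      ≤ (n - s - 2 - 1) * (n - s - 2) + (n - 1 - (n - s - 2)) * (n - 2 - (n - s - 2))
        + 2 * (n - s - 2 - a) := by
  obtain ⟨B, hB⟩ : ∃ B, n - s - 2 = B := ⟨_, rfl⟩
  rw [hB] at hb ⊢
  zify [show 1 ≤ b by omega, show b ≤ n - 1 by omega, show b ≤ n - 2 by omega, hab,
    show 1 ≤ B by omega, show B ≤ n - 1 by omega, show B ≤ n - 2 by omega,
    show a ≤ B by omega, show 1 ≤ n by omega, show 2 ≤ n by omega]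
  have h1 : (1 : ℤ) ≤ (B : ℤ) - b := by omega
  have h2 : (1 : ℤ) ≤ (b : ℤ) - s := by omega
  have hm : (B : ℤ) = (n : ℤ) - s - 2 := by omega
  have h3 : (1 : ℤ) * 1 ≤ ((B : ℤ) - b) * ((b : ℤ) - s) :=
    mul_le_mul h1 h2 (by linarith) (by linarith)
  nlinarith [h3, hm]

end Aux14

theorem stmt14 (n s a b : ℕ) (hs : 1 ≤ s) (hn : 2 * s + 5 ≤ n)
    (ha : s + 1 ≤ a) (hab : a ≤ b) (hb : b ≤ n - s - 2) :
    wiener (Tpend2 n a b) ≤ wiener (Tpend2 n a (n - s - 2)) ∧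
      (wiener (Tpend2 n a b) = wiener (Tpend2 n a (n - s - 2)) ↔ b = n - s - 2) := by
  have hn7 : 7 ≤ n := by omega
  have ha1 : 1 ≤ a := by omega
  have ha3 : a ≤ n - 3 := by omega
  have hb1 : 1 ≤ b := by omega
  have hb3 : b ≤ n - 3 := by omega
  have hB1 : 1 ≤ n - s - 2 := by omega
  have hB3 : n - s - 2 ≤ n - 3 := by omega
  set L : Fin n := ⟨n - 1, by omega⟩ with hLdef
  have hL : L.val = n - 1 := rfl
  have hw : ∀ j, 1 ≤ j → j ≤ n - 3 →
      wiener (Tpend2 n a j)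
        = (∑ u ∈ Finset.univ.erase L, ∑ v ∈ Finset.univ.erase L, Aux14.Dfun n a j u v) / 2
          + ∑ v : Fin n, Aux14.Dfun n a j L v := by
    intro j h1 h3
    unfold wiener
    have hd : ∀ u v : Fin n, (Tpend2 n a j).dist u v = Aux14.Dfun n a j u v :=
      Aux14.dist_eq hn7 ha1 ha3 h1 h3
    have hsum : (∑ u : Fin n, ∑ v : Fin n, (Tpend2 n a j).dist u v)
        = ∑ u : Fin n, ∑ v : Fin n, Aux14.Dfun n a j u v :=
      Finset.sum_congr rfl fun u _ => Finset.sum_congr rfl fun v _ => hd u v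
    rw [hsum, Aux14.total_eq n a j L, Nat.add_mul_div_left _ _ (by norm_num : 0 < 2)]
  have hCeq : (∑ u ∈ Finset.univ.erase L, ∑ v ∈ Finset.univ.erase L, Aux14.Dfun n a b u v)
      = ∑ u ∈ Finset.univ.erase L, ∑ v ∈ Finset.univ.erase L, Aux14.Dfun n a (n - s - 2) u v := by
    refine Finset.sum_congr rfl fun u hu => Finset.sum_congr rfl fun v hv => ?_
    refine Aux14.Dfun_indep n a b (n - s - 2) u v ?_ ?_
    · exact fun h => (Finset.mem_erase.mp hu).1 (Fin.ext (h.trans hL.symm))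
    · exact fun h => (Finset.mem_erase.mp hv).1 (Fin.ext (h.trans hL.symm))
  have hr_b := Aux14.row_sum (a := a) (b := b) hn7 ha1 ha3 hb1 hb3 L hL
  have hr_B := Aux14.row_sum (a := a) (b := n - s - 2) hn7 ha1 ha3 hB1 hB3 L hL
  have hdb : Aux14.dN (b - 1) (a - 1) = b - a := by unfold Aux14.dN; omega
  have hdB : Aux14.dN (n - s - 2 - 1) (a - 1) = n - s - 2 - a := by unfold Aux14.dN; omega
  rw [hdb] at hr_b
  rw [hdB] at hr_B
  rcases eq_or_lt_of_le hb with heq | hlt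
  · subst heq
    exact ⟨le_refl _, ⟨fun _ => rfl, fun _ => rfl⟩⟩
  · have hkey := Aux14.final_ineq n s a b hs hn ha hab hlt
    have hRlt : (∑ v : Fin n, Aux14.Dfun n a b L v) + 1
        ≤ ∑ v : Fin n, Aux14.Dfun n a (n - s - 2) L v := by
      omega
    rw [hw b hb1 hb3, hw (n - s - 2) hB1 hB3, hCeq]
    refine ⟨by omega, ?_⟩
    constructor
    · intro h
      omega
    · intro h
      omega
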